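/- Fourier expansion identity: for every n ∈ ℕ, t ≥ 0 and θ ∈ ℝ, U_n((1−e^{−t}) + e^{−t}cos θ) = Λ_0^n(t) + 2∑_{k=1}^{n} Λ_k^n(t) cos kθ, where Λ_k^n(t) = e^{−kt} ∑_{j=0}^{n−k} P_j^{(2k,0)}(1−2e^{−t}). -/

import Mathlib

open Finset Real
/-- Generalized binomial coefficient `a` choose `k`. -/
noncomputable def rbinom (a : ℝ) (k : ℕ) : ℝ :=
  (∏ i ∈ Finset.range k, (a - i)) / (k.factorial : ℝ)

/-- The Jacobi polynomial `P_j^{(α,β)}(x)` via the standard explicit formula. -/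
noncomputable def jacobi (α β : ℝ) (j : ℕ) (x : ℝ) : ℝ :=
  ∑ m ∈ Finset.range (j + 1),
    rbinom ((j : ℝ) + α) (j - m) * rbinom ((j : ℝ) + β) m *
      ((x - 1) / 2) ^ m * ((x + 1) / 2) ^ (j - m)


lemma wf_prod_desc (N k : ℕ) : ∏ i ∈ Finset.range k, ((N : ℝ) - i) = (N.descFactorial k : ℝ) := by
  induction k with
  | zero => simp
  | succ k ih =>
    rw [Finset.prod_range_succ, ih, Nat.descFactorial_succ]
    by_cases h : k < N
    · push_cast [Nat.cast_sub h.le]; ring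
    · have h3 : N ≤ k := by omega
      rcases eq_or_lt_of_le h3 with rfl | h4
      · simp
      · rw [Nat.descFactorial_eq_zero_iff_lt.2 h4]; simp

lemma wf_rbinom_nat (N k : ℕ) : rbinom (N : ℝ) k = (N.choose k : ℝ) := by
  have hk : (k.factorial : ℝ) ≠ 0 := by exact_mod_cast k.factorial_ne_zero
  rw [rbinom, wf_prod_desc, Nat.descFactorial_eq_factorial_mul_choose]
  push_cast
  field_simp

def wfc (a j s : ℕ) : ℕ := j.choose s * (j + a + s).choose j

noncomputable def wfG (a j : ℕ) (u : ℝ) : ℝ := ∑ s ∈ Finset.range (j + 1), (wfc a j s : ℝ) * u ^ s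

lemma wfG_zero (a : ℕ) (u : ℝ) : wfG a 0 u = 1 := by simp [wfG, wfc]

lemma wfc_top (a j : ℕ) : wfc a j (j + 1) = 0 := by
  simp [wfc, Nat.choose_eq_zero_of_lt]

lemma wfc_split (a j s : ℕ) :
    wfc (a + 1) (j + 1) s = wfc a (j + 1) s + (j + 1).choose s * (j + 1 + a + s).choose j := by
  have h1 : j + 1 + (a + 1) + s = (j + 1 + a + s) + 1 := by omega
  have h2 : (j + 1 + a + s + 1).choose (j + 1)
      = (j + 1 + a + s).choose j + (j + 1 + a + s).choose (j + 1) := Nat.choose_succ_succ _ _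
  simp only [wfc, h1, h2]
  ring

lemma wfd_split (a j s : ℕ) :
    (j + 1).choose (s + 1) * (j + 1 + a + (s + 1)).choose j
      = wfc (a + 1) j (s + 1) + wfc (a + 2) j s := by
  have h1 : (j + 1).choose (s + 1) = j.choose s + j.choose (s + 1) := Nat.choose_succ_succ _ _
  simp only [wfc]
  rw [h1, add_mul,
      show j + (a+1) + (s+1) = j + 1 + a + (s+1) from by omega,
      show j + (a+2) + s = j + 1 + a + (s+1) from by omega]
  ring

lemma wfG_rec (a j : ℕ) (u : ℝ) :
    wfG (a + 1) (j + 1) u = wfG a (j + 1) u + wfG (a + 1) j u + u * wfG (a + 2) j u := by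
  have e1 : wfG (a + 1) (j + 1) u = wfG a (j + 1) u
      + ∑ s ∈ Finset.range (j + 2), ((j + 1).choose s * (j + 1 + a + s).choose j : ℕ) * u ^ s := by
    rw [wfG, wfG, ← Finset.sum_add_distrib]
    refine Finset.sum_congr rfl fun s _ => ?_
    rw [wfc_split]
    push_cast
    ring
  have e3 : wfG (a + 1) j u
      = (∑ s ∈ Finset.range (j + 1), (wfc (a+1) j (s+1) : ℝ) * u ^ (s+1))
        + ((j + 1).choose 0 * (j + 1 + a + 0).choose j : ℕ) * u ^ 0 := by
    have h : wfG (a + 1) j u = ∑ s ∈ Finset.range (j + 2), (wfc (a+1) j s : ℝ) * u ^ s := by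
      rw [wfG, Finset.sum_range_succ _ (j + 1), wfc_top]
      simp
    rw [h, Finset.sum_range_succ' (fun s => (wfc (a+1) j s : ℝ) * u ^ s)]
    simp only [wfc]
    norm_num
    rw [show j + (a + 1) = j + 1 + a from by omega]
  have e4 : ∑ s ∈ Finset.range (j + 2), ((j + 1).choose s * (j + 1 + a + s).choose j : ℕ) * u ^ s
      = wfG (a + 1) j u + u * wfG (a + 2) j u := by
    rw [Finset.sum_range_succ' (fun s => ((j + 1).choose s * (j + 1 + a + s).choose j : ℕ) * u ^ s)]
    have e2 : ∀ s : ℕ, (((j + 1).choose (s+1) * (j + 1 + a + (s+1)).choose j : ℕ) : ℝ) * u ^ (s+1)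
        = (wfc (a+1) j (s+1) : ℝ) * u ^ (s+1) + u * ((wfc (a+2) j s : ℝ) * u ^ s) := by
      intro s
      rw [wfd_split]
      push_cast
      ring
    rw [Finset.sum_congr rfl fun s _ => e2 s, Finset.sum_add_distrib, e3, wfG, Finset.mul_sum]
    ring
  rw [e1, e4]
  ring

lemma wf_trinom (j s : ℕ) :
    (j + 1).choose (s + 1) * (j + s + 1).choose (j + 1) = j.choose s * (j + s + 1).choose j := by
  have h1 := Nat.choose_mul (n := j + s + 1) (k := j + 1) (s := j) (by omega)
  rw [Nat.choose_succ_self_right, show j + s + 1 - j = s + 1 from by omega,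
      show j + 1 - j = 1 from by omega, Nat.choose_one_right] at h1
  have h2 : (j + 1) * j.choose s = (j + 1).choose (s + 1) * (s + 1) := Nat.add_one_mul_choose_eq j s
  zify at h1 h2 ⊢
  have hne : ((j:ℤ) + 1) * ((s:ℤ) + 1) ≠ 0 := by positivity
  refine mul_left_cancel₀ hne ?_
  linear_combination ((s:ℤ) + 1) * ((j + 1).choose (s + 1) : ℤ) * h1
    - ((s:ℤ) + 1) * (((j + s + 1).choose j : ℕ) : ℤ) * h2

lemma wfc0_split (j s : ℕ) :
    wfc 0 (j + 1) (s + 1) = wfc 0 j (s + 1) + 2 * wfc 1 j s := by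
  have h1 : (j + 1 + 0 + (s + 1)).choose (j + 1)
      = (j + s + 1).choose j + (j + s + 1).choose (j + 1) := by
    rw [show j + 1 + 0 + (s + 1) = (j + s + 1) + 1 from by omega]
    exact Nat.choose_succ_succ _ _
  have h2 : (j + 1).choose (s + 1) = j.choose s + j.choose (s + 1) := Nat.choose_succ_succ _ _
  simp only [wfc, h1]
  rw [Nat.mul_add, wf_trinom, h2, Nat.add_mul,
      show j + 0 + (s + 1) = j + s + 1 from by omega,
      show j + 1 + s = j + s + 1 from by omega]
  ring

lemma wfG0_rec (j : ℕ) (u : ℝ) :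
    wfG 0 (j + 1) u = wfG 0 j u + 2 * u * wfG 1 j u := by
  have peel : ∀ (a : ℕ), wfG a j u
      = (∑ s ∈ Finset.range (j + 1), (wfc a j (s+1) : ℝ) * u ^ (s+1)) + (wfc a j 0 : ℝ) := by
    intro a
    have h : wfG a j u = ∑ s ∈ Finset.range (j + 2), (wfc a j s : ℝ) * u ^ s := by
      rw [wfG, Finset.sum_range_succ _ (j + 1), wfc_top]
      simp
    rw [h, Finset.sum_range_succ' (fun s => (wfc a j s : ℝ) * u ^ s)]
    simp
  rw [wfG, Finset.sum_range_succ' (fun s => (wfc 0 (j+1) s : ℝ) * u ^ s)]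
  have e2 : ∀ s : ℕ, (wfc 0 (j+1) (s+1) : ℝ) * u ^ (s+1)
      = (wfc 0 j (s+1) : ℝ) * u ^ (s+1) + 2 * u * ((wfc 1 j s : ℝ) * u ^ s) := by
    intro s
    rw [wfc0_split]
    push_cast
    ring
  rw [Finset.sum_congr rfl fun s _ => e2 s, Finset.sum_add_distrib, peel 0, wfG, Finset.mul_sum]
  simp [wfc]
  ring

/-- five-term recurrence (A') -/
lemma wfA (k m : ℕ) (u : ℝ) :
    wfG (2*k+2) (m+2) u + wfG (2*k+2) m u
      = 2*(1+u) * wfG (2*k+2) (m+1) u + wfG (2*k) (m+2) u + u^2 * wfG (2*k+4) m u := by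
  have h1 : wfG (2*k+2) (m+2) u
      = wfG (2*k+1) (m+2) u + wfG (2*k+2) (m+1) u + u * wfG (2*k+3) (m+1) u :=
    wfG_rec (2*k+1) (m+1) u
  have h2 : wfG (2*k+1) (m+2) u
      = wfG (2*k) (m+2) u + wfG (2*k+1) (m+1) u + u * wfG (2*k+2) (m+1) u :=
    wfG_rec (2*k) (m+1) u
  have h4 : wfG (2*k+3) (m+1) u
      = wfG (2*k+2) (m+1) u + wfG (2*k+3) m u + u * wfG (2*k+4) m u :=
    wfG_rec (2*k+2) m u
  have h5 : wfG (2*k+2) (m+1) u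
      = wfG (2*k+1) (m+1) u + wfG (2*k+2) m u + u * wfG (2*k+3) m u :=
    wfG_rec (2*k+1) m u
  linear_combination h1 + h2 + u * h4 - h5

/-- five-term recurrence at k = 0 (A0') -/
lemma wfA0 (m : ℕ) (u : ℝ) :
    wfG 0 (m+2) u + wfG 0 m u = 2*(1+u) * wfG 0 (m+1) u + 2 * u^2 * wfG 2 m u := by
  have h1 : wfG 0 (m+2) u = wfG 0 (m+1) u + 2 * u * wfG 1 (m+1) u := wfG0_rec (m+1) u
  have h2 : wfG 1 (m+1) u = wfG 0 (m+1) u + wfG 1 m u + u * wfG 2 m u := wfG_rec 0 m u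
  have h3 : wfG 0 (m+1) u = wfG 0 m u + 2 * u * wfG 1 m u := wfG0_rec m u
  linear_combination h1 + 2 * u * h2 - h3

noncomputable def wfS (k m : ℕ) (u : ℝ) : ℝ := ∑ j ∈ Finset.range m, wfG (2*k) j u

lemma wfS_one (k : ℕ) (u : ℝ) : wfS k 1 u = 1 := by simp [wfS, wfG_zero]

lemma wfS_expand (k m : ℕ) (u : ℝ) : wfS k (m+1) u = wfS k m u + wfG (2*k) m u := by
  simp [wfS, Finset.sum_range_succ]

lemma wfS_rec (k m : ℕ) (u : ℝ) :
    wfS (k+1) (m+2) u = 2*(1+u) * wfS (k+1) (m+1) u + wfS k (m+2) u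
      + u^2 * wfS (k+2) m u - wfS (k+1) m u := by
  have h2k : 2*(k+1) = 2*k+2 := by ring
  have h2k2 : 2*(k+2) = 2*k+4 := by ring
  induction m with
  | zero =>
    have h1 : wfG (2*k+2) 1 u = wfG (2*k+1) 1 u + 1 + u := by
      have := wfG_rec (2*k+1) 0 u
      simpa [wfG_zero] using this
    have h2 : wfG (2*k+1) 1 u = wfG (2*k) 1 u + 1 + u := by
      have := wfG_rec (2*k) 0 u
      simpa [wfG_zero] using this
    simp only [wfS, Finset.sum_range_succ, Finset.sum_range_zero, h2k, h2k2, wfG_zero]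
    linear_combination h1 + h2
  | succ m ih =>
    have key : wfG (2*k+2) (m+3) u + wfG (2*k+2) (m+1) u
        = 2*(1+u) * wfG (2*k+2) (m+2) u + wfG (2*k) (m+3) u + u^2 * wfG (2*k+4) (m+1) u :=
      wfA k (m+1) u
    have e1 : wfS (k+1) (m+3) u = wfS (k+1) (m+2) u + wfG (2*k+2) (m+2) u := by
      rw [wfS_expand, h2k]
    have e2 : wfS (k+1) (m+2) u = wfS (k+1) (m+1) u + wfG (2*k+2) (m+1) u := by
      rw [wfS_expand, h2k]
    have e3 : wfS k (m+3) u = wfS k (m+2) u + wfG (2*k) (m+2) u := wfS_expand k (m+2) u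
    have e4 : wfS (k+2) (m+1) u = wfS (k+2) m u + wfG (2*k+4) m u := by
      rw [wfS_expand, h2k2]
    have e5 : wfS (k+1) (m+1) u = wfS (k+1) m u + wfG (2*k+2) m u := by
      rw [wfS_expand, h2k]
    have key' : wfG (2*k+2) (m+2) u + wfG (2*k+2) m u
        = 2*(1+u) * wfG (2*k+2) (m+1) u + wfG (2*k) (m+2) u + u^2 * wfG (2*k+4) m u :=
      wfA k m u
    linear_combination e1 + ih - 2*(1+u) * e2 - e3 - u^2 * e4 + e5 + key'

lemma wfS0_rec (m : ℕ) (u : ℝ) :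
    wfS 0 (m+2) u = 2*(1+u) * wfS 0 (m+1) u + 2 * u^2 * wfS 1 m u - wfS 0 m u := by
  induction m with
  | zero =>
    have h1 : wfG 0 1 u = 1 + 2 * u := by
      have := wfG0_rec 0 u
      simpa [wfG_zero] using this
    simp only [wfS, Finset.sum_range_succ, Finset.sum_range_zero, wfG_zero]
    linear_combination h1
  | succ m ih =>
    have key : wfG 0 (m+3) u + wfG 0 (m+1) u
        = 2*(1+u) * wfG 0 (m+2) u + 2 * u^2 * wfG 2 (m+1) u := wfA0 (m+1) u
    have e1 : wfS 0 (m+3) u = wfS 0 (m+2) u + wfG 0 (m+2) u := by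
      simpa using wfS_expand 0 (m+2) u
    have e2 : wfS 0 (m+2) u = wfS 0 (m+1) u + wfG 0 (m+1) u := by
      simpa using wfS_expand 0 (m+1) u
    have e4 : wfS 1 (m+1) u = wfS 1 m u + wfG 2 m u := by
      simpa using wfS_expand 1 m u
    have e5 : wfS 0 (m+1) u = wfS 0 m u + wfG 0 m u := by
      simpa using wfS_expand 0 m u
    have key' : wfG 0 (m+2) u + wfG 0 m u
        = 2*(1+u) * wfG 0 (m+1) u + 2 * u^2 * wfG 2 m u := wfA0 m u
    linear_combination e1 + ih - 2*(1+u) * e2 - 2*u^2 * e4 + e5 + key'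

lemma wf_inner (a j s : ℕ) (hs : s ≤ j) :
    ∑ m ∈ Finset.range (s + 1), (j + a).choose (j - m) * (j.choose m * (j - m).choose (s - m))
      = wfc a j s := by
  have h1 : ∀ m ∈ Finset.range (s + 1),
      (j + a).choose (j - m) * (j.choose m * (j - m).choose (s - m))
        = j.choose s * (s.choose m * (j + a).choose (j - m)) := by
    intro m hm
    rw [Finset.mem_range] at hm
    have := Nat.choose_mul (n := j) (k := s) (s := m) (by omega)
    rw [← this]
    ring
  rw [Finset.sum_congr rfl h1, ← Finset.mul_sum]
  have h2 : ∑ m ∈ Finset.range (j + 1), s.choose m * (j + a).choose (j - m)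
      = (s + (j + a)).choose j := by
    rw [Nat.add_choose_eq, Finset.Nat.sum_antidiagonal_eq_sum_range_succ_mk]
  have h3 : ∑ m ∈ Finset.range (s + 1), s.choose m * (j + a).choose (j - m)
      = ∑ m ∈ Finset.range (j + 1), s.choose m * (j + a).choose (j - m) := by
    refine Finset.sum_subset (by intro x hx; rw [Finset.mem_range] at hx ⊢; omega) ?_
    intro x _ hx
    rw [Finset.mem_range] at hx
    rw [Nat.choose_eq_zero_of_lt (by omega), Nat.zero_mul]
  rw [h3, h2, wfc, show s + (j + a) = j + a + s from by omega]

lemma wf_jacobi_eq (a j : ℕ) (r : ℝ) : jacobi (a : ℝ) 0 j (1 - 2 * r) = wfG a j (-r) := by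
  have e0 : ∀ m : ℕ, rbinom ((j : ℝ) + (a : ℝ)) m = ((j + a).choose m : ℝ) := by
    intro m
    rw [show ((j : ℝ) + (a : ℝ)) = (((j + a : ℕ) : ℝ)) from by push_cast; ring, wf_rbinom_nat]
  have e1 : ∀ m : ℕ, rbinom ((j : ℝ) + (0 : ℝ)) m = (j.choose m : ℝ) := by
    intro m
    rw [show ((j : ℝ) + (0 : ℝ)) = ((j : ℕ) : ℝ) from by push_cast; ring, wf_rbinom_nat]
  have hx1 : ((1 - 2 * r - 1) / 2 : ℝ) = -r := by ring
  have hx2 : ((1 - 2 * r + 1) / 2 : ℝ) = 1 - r := by ring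
  rw [jacobi]
  simp only [e0, e1, hx1, hx2]
  have expand : ∀ m : ℕ, m ≤ j →
      ((1 : ℝ) - r) ^ (j - m) = ∑ i ∈ Finset.range (j - m + 1), ((j-m).choose i : ℝ) * (-r) ^ i := by
    intro m _
    rw [show (1 : ℝ) - r = -r + 1 from by ring, add_pow]
    exact Finset.sum_congr rfl fun i _ => by norm_num; ring
  have step1 : ∑ m ∈ Finset.range (j + 1),
      ((j + a).choose (j - m) : ℝ) * (j.choose m : ℝ) * (-r) ^ m * (1 - r) ^ (j - m)
      = ∑ m ∈ Finset.range (j + 1), ∑ s ∈ Finset.Ico m (j + 1),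
          ((j + a).choose (j - m) : ℝ) * (j.choose m : ℝ) * ((j-m).choose (s-m) : ℝ) * (-r) ^ s := by
    refine Finset.sum_congr rfl fun m hm => ?_
    rw [Finset.mem_range] at hm
    rw [expand m (by omega), Finset.mul_sum, Finset.sum_Ico_eq_sum_range]
    rw [show j + 1 - m = j - m + 1 from by omega]
    refine Finset.sum_congr rfl fun i _ => ?_
    rw [show m + i - m = i from by omega, pow_add]
    ring
  rw [step1, show Finset.range (j+1) = Finset.Ico 0 (j+1) from by rw [Finset.range_eq_Ico],
      Finset.sum_Ico_Ico_comm]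
  rw [wfG]
  rw [← Finset.range_eq_Ico]
  refine Finset.sum_congr rfl fun s hs => ?_
  rw [Finset.mem_range] at hs
  rw [← Finset.sum_mul]
  congr 1
  rw [← wf_inner a j s (by omega)]
  push_cast
  exact Finset.sum_congr (by rw [Finset.range_eq_Ico]) fun m _ => by ring

lemma wfS_zero (k : ℕ) (u : ℝ) : wfS k 0 u = 0 := by simp [wfS]

lemma wf_cos (θ : ℝ) (i : ℕ) :
    2 * Real.cos θ * Real.cos (((i : ℝ) + 1) * θ)
      = Real.cos (((i : ℝ) + 1 + 1) * θ) + Real.cos ((i : ℝ) * θ) := by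
  have h1 : ((i : ℝ) + 1 + 1) * θ = ((i : ℝ) + 1) * θ + θ := by ring
  have h2 : ((i : ℝ)) * θ = ((i : ℝ) + 1) * θ - θ := by ring
  rw [h1, h2, Real.cos_add, Real.cos_sub]
  ring

lemma wf_main (n : ℕ) (r θ : ℝ) :
    (Polynomial.Chebyshev.U ℝ (n : ℤ)).eval ((1 - r) + r * Real.cos θ)
      = wfS 0 (n + 1) (-r)
        + 2 * ∑ i ∈ Finset.range n,
            r ^ (i + 1) * wfS (i + 1) (n - i) (-r) * Real.cos (((i : ℝ) + 1) * θ) := by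
  induction n using Nat.twoStepInduction with
  | zero =>
    norm_num [Polynomial.Chebyshev.U_zero, wfS_one]
  | one =>
    have h1 : wfG 0 1 (-r) = 1 + 2 * (-r) := by
      have := wfG0_rec 0 (-r)
      simpa [wfG_zero] using this
    have h2 : wfS 0 2 (-r) = 2 - 2 * r := by
      have := wfS_expand 0 1 (-r)
      simp only [wfS_one] at this
      rw [this, show 2 * 0 = 0 from rfl, h1]
      ring
    have hU1 : ((Polynomial.Chebyshev.U ℝ ((1 : ℕ) : ℤ))).eval ((1 - r) + r * Real.cos θ)
        = 2 * ((1 - r) + r * Real.cos θ) := by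
      norm_num [Polynomial.Chebyshev.U_one]
    rw [hU1]
    rw [Finset.sum_range_one]
    norm_num [h2, wfS_one]
    ring
  | more n ih1 ih2 =>
    have hcast2 : ((n + 2 : ℕ) : ℤ) = ((n : ℕ) : ℤ) + 2 := by push_cast; ring
    have hcast1 : ((n : ℕ) : ℤ) + 1 = ((n + 1 : ℕ) : ℤ) := by push_cast; ring
    rw [hcast2, Polynomial.Chebyshev.U_add_two, hcast1]
    rw [Polynomial.eval_sub, Polynomial.eval_mul, Polynomial.eval_mul, Polynomial.eval_X,
        Polynomial.eval_ofNat, ih2, ih1]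
    -- pure algebra from here on
    -- edge identity for the zero mode
    have H1 : wfS 0 (n + 2 + 1) (-r)
        = 2 * (1 - r) * wfS 0 (n + 1 + 1) (-r) + 2 * r ^ 2 * wfS 1 (n + 1) (-r)
          - wfS 0 (n + 1) (-r) := by
      have h := wfS0_rec (n + 1) (-r)
      rw [show n + 1 + 2 = n + 2 + 1 from by omega] at h
      linear_combination h
    -- peel the level-(n+1) sum
    have H0 : ∑ i ∈ Finset.range (n + 1),
          r ^ (i + 1) * wfS (i + 1) (n + 1 - i) (-r) * Real.cos (((i : ℝ) + 1) * θ)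
        = (∑ i ∈ Finset.range n,
            r ^ (i + 1) * wfS (i + 1) (n + 1 - i) (-r) * Real.cos (((i : ℝ) + 1) * θ))
          + r ^ (n + 1) * wfS (n + 1) 1 (-r) * Real.cos (((n : ℝ) + 1) * θ) := by
      rw [Finset.sum_range_succ, show n + 1 - n = 1 from by omega]
    -- peel the level-(n+2) sum (the goal's left sum)
    have HL : ∑ i ∈ Finset.range (n + 2),
          r ^ (i + 1) * wfS (i + 1) (n + 2 - i) (-r) * Real.cos (((i : ℝ) + 1) * θ)
        = (∑ i ∈ Finset.range n,
            r ^ (i + 1) * wfS (i + 1) (n + 2 - i) (-r) * Real.cos (((i : ℝ) + 1) * θ))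
          + r ^ (n + 1) * wfS (n + 1) 2 (-r) * Real.cos (((n : ℝ) + 1) * θ)
          + r ^ (n + 2) * wfS (n + 2) 1 (-r) * Real.cos (((n : ℝ) + 1 + 1) * θ) := by
      rw [Finset.sum_range_succ, Finset.sum_range_succ,
          show n + 2 - n = 2 from by omega, show n + 2 - (n + 1) = 1 from by omega,
          show n + 1 + 1 = n + 2 from rfl]
      push_cast
      ring
    -- product-to-sum
    have H2 : 2 * r * Real.cos θ * ∑ i ∈ Finset.range (n + 1),
          r ^ (i + 1) * wfS (i + 1) (n + 1 - i) (-r) * Real.cos (((i : ℝ) + 1) * θ)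
        = (∑ i ∈ Finset.range (n + 1),
            r ^ (i + 2) * wfS (i + 1) (n + 1 - i) (-r) * Real.cos (((i : ℝ) + 1 + 1) * θ))
          + ∑ i ∈ Finset.range (n + 1),
            r ^ (i + 2) * wfS (i + 1) (n + 1 - i) (-r) * Real.cos ((i : ℝ) * θ) := by
      rw [Finset.mul_sum, ← Finset.sum_add_distrib]
      refine Finset.sum_congr rfl fun i _ => ?_
      have hc := wf_cos θ i
      linear_combination (r ^ (i + 2) * wfS (i + 1) (n + 1 - i) (-r)) * hc
    -- shift reindex for the raised-frequency sum
    have hQ : ∑ i ∈ Finset.range (n + 2),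
          r ^ (i + 1) * wfS i (n + 2 - i) (-r) * Real.cos (((i : ℝ) + 1) * θ)
        = (∑ i ∈ Finset.range (n + 1),
            r ^ (i + 2) * wfS (i + 1) (n + 1 - i) (-r) * Real.cos (((i : ℝ) + 1 + 1) * θ))
          + r * wfS 0 (n + 1 + 1) (-r) * Real.cos θ := by
      rw [Finset.sum_range_succ'
        (fun i => r ^ (i + 1) * wfS i (n + 2 - i) (-r) * Real.cos (((i : ℝ) + 1) * θ)) (n + 1)]
      congr 1
      · refine Finset.sum_congr rfl fun i _ => ?_
        rw [show n + 2 - (i + 1) = n + 1 - i from by omega]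
        push_cast
        ring
      · norm_num
    -- peel the auxiliary sum
    have hpQ : ∑ i ∈ Finset.range (n + 2),
          r ^ (i + 1) * wfS i (n + 2 - i) (-r) * Real.cos (((i : ℝ) + 1) * θ)
        = (∑ i ∈ Finset.range n,
            r ^ (i + 1) * wfS i (n + 2 - i) (-r) * Real.cos (((i : ℝ) + 1) * θ))
          + r ^ (n + 1) * wfS n 2 (-r) * Real.cos (((n : ℝ) + 1) * θ)
          + r ^ (n + 2) * wfS (n + 1) 1 (-r) * Real.cos (((n : ℝ) + 1 + 1) * θ) := by
      rw [Finset.sum_range_succ, Finset.sum_range_succ,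
          show n + 2 - n = 2 from by omega, show n + 2 - (n + 1) = 1 from by omega,
          show n + 1 + 1 = n + 2 from rfl]
      push_cast
      ring
    -- shift reindex for the lowered-frequency sum
    have H4 : ∑ i ∈ Finset.range (n + 1),
          r ^ (i + 2) * wfS (i + 1) (n + 1 - i) (-r) * Real.cos ((i : ℝ) * θ)
        = (∑ i ∈ Finset.range n,
            r ^ (i + 3) * wfS (i + 2) (n - i) (-r) * Real.cos (((i : ℝ) + 1) * θ))
          + r ^ 2 * wfS 1 (n + 1) (-r) := by
      rw [Finset.sum_range_succ'
        (fun i => r ^ (i + 2) * wfS (i + 1) (n + 1 - i) (-r) * Real.cos ((i : ℝ) * θ)) n]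
      congr 1
      · refine Finset.sum_congr rfl fun i _ => ?_
        rw [show n + 1 - (i + 1) = n - i from by omega]
        push_cast
        ring
      · norm_num
    -- interior three-term recurrence
    have H5 : ∑ i ∈ Finset.range n,
          r ^ (i + 1) * wfS (i + 1) (n + 2 - i) (-r) * Real.cos (((i : ℝ) + 1) * θ)
        = 2 * (1 - r) * (∑ i ∈ Finset.range n,
            r ^ (i + 1) * wfS (i + 1) (n + 1 - i) (-r) * Real.cos (((i : ℝ) + 1) * θ))
          + (∑ i ∈ Finset.range n,
            r ^ (i + 1) * wfS i (n + 2 - i) (-r) * Real.cos (((i : ℝ) + 1) * θ))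
          + (∑ i ∈ Finset.range n,
            r ^ (i + 3) * wfS (i + 2) (n - i) (-r) * Real.cos (((i : ℝ) + 1) * θ))
          - ∑ i ∈ Finset.range n,
            r ^ (i + 1) * wfS (i + 1) (n - i) (-r) * Real.cos (((i : ℝ) + 1) * θ) := by
      rw [Finset.mul_sum, ← Finset.sum_add_distrib, ← Finset.sum_add_distrib,
          ← Finset.sum_sub_distrib]
      refine Finset.sum_congr rfl fun i hi => ?_
      rw [Finset.mem_range] at hi
      have h := wfS_rec i (n - i) (-r)
      rw [show n - i + 2 = n + 2 - i from by omega,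
          show n - i + 1 = n + 1 - i from by omega] at h
      linear_combination (r ^ (i + 1) * Real.cos (((i : ℝ) + 1) * θ)) * h
    -- top edge
    have H6 : wfS (n + 1) 2 (-r) = 2 * (1 - r) * wfS (n + 1) 1 (-r) + wfS n 2 (-r) := by
      have h := wfS_rec n 0 (-r)
      rw [wfS_zero, wfS_zero] at h
      linear_combination h
    have H7a : wfS (n + 1) 1 (-r) = 1 := wfS_one (n + 1) (-r)
    have H7b : wfS (n + 2) 1 (-r) = 1 := wfS_one (n + 2) (-r)
    linear_combination (-1 : ℝ) * H1 + 2 * H2 - 2 * hQ + 2 * hpQ + 2 * H4 - 2 * H5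
      + 4 * (1 - r) * H0 - 2 * HL
      - 2 * (r ^ (n + 1)) * Real.cos (((n : ℝ) + 1) * θ) * H6
      - 2 * r * (r ^ (n + 1)) * Real.cos (((n : ℝ) + 1 + 1) * θ) * (H7b - H7a)

/-- Fourier expansion of the Weinstein functions:
`U_n((1-e^{-t}) + e^{-t}cos θ) = Λ₀ⁿ(t) + 2∑_{k=1}^n Λ_kⁿ(t) cos kθ`, where
`Λ_kⁿ(t) = e^{-kt} ∑_{j=0}^{n-k} P_j^{(2k,0)}(1-2e^{-t})`. -/
theorem weinstein_fourier_expansion (n : ℕ) (t : ℝ) (ht : 0 ≤ t) (θ : ℝ) :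
    (Polynomial.Chebyshev.U ℝ n).eval ((1 - Real.exp (-t)) + Real.exp (-t) * Real.cos θ) =
      (Real.exp (-(0 : ℝ) * t) *
          ∑ j ∈ Finset.range (n - 0 + 1), jacobi (2 * 0) 0 j (1 - 2 * Real.exp (-t))) +
        2 * ∑ k ∈ Finset.Icc 1 n,
          (Real.exp (-(k : ℝ) * t) *
              ∑ j ∈ Finset.range (n - k + 1), jacobi (2 * k) 0 j (1 - 2 * Real.exp (-t))) *
            Real.cos (k * θ) := by
  set r := Real.exp (-t) with hr
  have hSj : ∀ k m : ℕ, ∑ j ∈ Finset.range m, jacobi (2 * (k : ℝ)) 0 j (1 - 2 * r)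
      = wfS k m (-r) := by
    intro k m
    rw [wfS]
    refine Finset.sum_congr rfl fun j _ => ?_
    rw [show (2 * (k : ℝ)) = ((2 * k : ℕ) : ℝ) from by push_cast; ring]
    exact wf_jacobi_eq (2 * k) j r
  have hexp : ∀ k : ℕ, Real.exp (-(k : ℝ) * t) = r ^ k := by
    intro k
    rw [hr, ← Real.exp_nat_mul]
    congr 1
    ring
  have hmain := wf_main n r θ
  rw [hmain]
  have h0 : Real.exp (-(0 : ℝ) * t) = 1 := by norm_num
  rw [h0]
  have hIcc : ∑ k ∈ Finset.Icc 1 n,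
        (Real.exp (-(k : ℝ) * t) *
            ∑ j ∈ Finset.range (n - k + 1), jacobi (2 * k) 0 j (1 - 2 * r)) * Real.cos (k * θ)
      = ∑ i ∈ Finset.range n,
        r ^ (i + 1) * wfS (i + 1) (n - i) (-r) * Real.cos (((i : ℝ) + 1) * θ) := by
    rw [← Finset.Ico_add_one_right_eq_Icc, Finset.sum_Ico_eq_sum_range,
        show n + 1 - 1 = n from by omega]
    refine Finset.sum_congr rfl fun i hi => ?_
    rw [Finset.mem_range] at hi
    rw [hexp (1 + i), hSj (1 + i) (n - (1 + i) + 1),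
        show n - (1 + i) + 1 = n - i from by omega, show 1 + i = i + 1 from by omega]
    push_cast
    ring
  rw [hIcc, show (2 * 0 : ℝ) = 2 * ((0 : ℕ) : ℝ) from by norm_num,
      hSj 0 (n - 0 + 1), show n - 0 + 1 = n + 1 from by omega]
  ring
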